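/- With the notation of the standardization bound, for 0 < m < n the bound √(m(n−m)) is attained if and only if all selected values are equal to μ̂ + s·√((n−m)/m)·σ̂ and all non-selected values equal μ̂ − s·√(m/(n−m))·σ̂ for some s ∈ {−1,1}. -/

import Mathlib

private lemma sqrt_mul_div (a b : ℝ) (ha : 0 < a) (hb : 0 ≤ b) :
    Real.sqrt (a*b) / a = Real.sqrt (b/a) := by
  rw [Real.sqrt_div hb, Real.sqrt_mul ha.le, eq_div_iff (by positivity : Real.sqrt a ≠ 0)]
  rw [div_mul_eq_mul_div, mul_comm (Real.sqrt a), mul_assoc, Real.mul_self_sqrt ha.le,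
    mul_div_assoc, div_self ha.ne', mul_one]

private lemma sum_sq_sub_const {ι : Type*} (F : Finset ι) (f : ι → ℝ) (a : ℝ) :
    ∑ i ∈ F, (f i - a)^2 = ∑ i ∈ F, (f i)^2 - 2*a*(∑ i ∈ F, f i) + F.card * a^2 := by
  simp only [sub_sq]
  rw [Finset.sum_add_distrib, Finset.sum_sub_distrib, Finset.sum_const, nsmul_eq_mul]
  congr 1
  congr 1
  rw [Finset.mul_sum]
  exact Finset.sum_congr rfl fun i _ => by ring

/-- Equality case of the standardization bound for 0 < m < n. -/
theorem standardization_bound_eq_iff (n m : ℕ) (x : Fin n → ℝ) (μ σ : ℝ)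
    (hμ : μ = (∑ i, x i) / n)
    (hσ : σ = Real.sqrt ((∑ i, (x i - μ) ^ 2) / n))
    (hσpos : 0 < σ)
    (S : Finset (Fin n)) (hS : S.card = m) (hm0 : 0 < m) (hmn : m < n) :
    |∑ i ∈ S, (x i - μ) / σ| = Real.sqrt ((m : ℝ) * ((n : ℝ) - (m : ℝ))) ↔
      ∃ s : ℝ, (s = 1 ∨ s = -1) ∧
        (∀ i ∈ S, x i = μ + s * Real.sqrt (((n : ℝ) - (m : ℝ)) / (m : ℝ)) * σ) ∧
        (∀ i ∉ S, x i = μ - s * Real.sqrt ((m : ℝ) / ((n : ℝ) - (m : ℝ))) * σ) := by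
  have hn0 : 0 < n := lt_trans hm0 hmn
  have hnR : (0:ℝ) < n := by exact_mod_cast hn0
  have hmR : (0:ℝ) < m := by exact_mod_cast hm0
  have hnm : (0:ℝ) < (n:ℝ) - m := by
    have : (m:ℝ) < n := by exact_mod_cast hmn
    linarith
  set y : Fin n → ℝ := fun i => (x i - μ) / σ with hy
  have hcardsR : ((Sᶜ : Finset (Fin n)).card : ℝ) = (n:ℝ) - m := by
    rw [Finset.card_compl, Fintype.card_fin, hS, Nat.cast_sub hmn.le]
  -- sum of y is zero
  have hsum : (∑ i, y i) = 0 := by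
    have h0 : ∑ i, (x i - μ) = 0 := by
      rw [Finset.sum_sub_distrib, Finset.sum_const, Finset.card_univ, Fintype.card_fin,
        nsmul_eq_mul, hμ]
      field_simp
      ring
    simp only [hy]
    rw [← Finset.sum_div, h0, zero_div]
  -- sum of squares is n
  have hsq : (∑ i, (y i)^2) = n := by
    have hA : ∑ i, (x i - μ)^2 = n * σ^2 := by
      have h1 : σ^2 = (∑ i, (x i - μ) ^ 2) / n := by
        rw [hσ, Real.sq_sqrt (by positivity)]
      rw [h1]; field_simp
    have h2 : ∑ i, (y i)^2 = (∑ i, (x i - μ)^2) / σ^2 := by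
      rw [Finset.sum_div]
      exact Finset.sum_congr rfl fun i _ => by rw [div_pow]
    rw [h2, hA]
    field_simp
  have hsplit : (∑ i ∈ S, y i) + (∑ i ∈ Sᶜ, y i) = 0 := by
    rw [Finset.sum_add_sum_compl]; exact hsum
  have hsqsplit : (∑ i ∈ S, (y i)^2) + (∑ i ∈ Sᶜ, (y i)^2) = n := by
    rw [Finset.sum_add_sum_compl]; exact hsq
  set T : ℝ := ∑ i ∈ S, y i with hT
  have hTc : ∑ i ∈ Sᶜ, y i = -T := by linarith
  have hxy : ∀ i, x i = μ + y i * σ := by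
    intro i; simp only [hy]; field_simp; ring
  have hsqrtpos : 0 < Real.sqrt ((m : ℝ) * ((n:ℝ) - m)) := Real.sqrt_pos.2 (by positivity)
  constructor
  · intro habs
    have hT2 : T^2 = (m : ℝ) * ((n:ℝ) - m) := by
      rw [← sq_abs, habs, Real.sq_sqrt (by positivity)]
    have h1 : ∑ i ∈ S, (y i - T/m)^2 = (∑ i ∈ S, (y i)^2) - T^2/m := by
      rw [sum_sq_sub_const, hS, ← hT]
      field_simp
      ring
    have h2 : ∑ i ∈ Sᶜ, (y i + T/((n:ℝ)-m))^2 = (∑ i ∈ Sᶜ, (y i)^2) - T^2/((n:ℝ)-m) := by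
      have := sum_sq_sub_const Sᶜ y (-(T/((n:ℝ)-m)))
      simp only [sub_neg_eq_add] at this
      rw [this, hcardsR, hTc]
      field_simp
      ring
    have hkey : T^2/m + T^2/((n:ℝ)-m) = n := by
      rw [hT2]
      field_simp <;> ring
    have hzero : (∑ i ∈ S, (y i - T/m)^2) + (∑ i ∈ Sᶜ, (y i + T/((n:ℝ)-m))^2) = 0 := by
      rw [h1, h2]; linarith
    have n1 : (0:ℝ) ≤ ∑ i ∈ S, (y i - T/m)^2 := Finset.sum_nonneg fun i _ => sq_nonneg _
    have n2 : (0:ℝ) ≤ ∑ i ∈ Sᶜ, (y i + T/((n:ℝ)-m))^2 :=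
      Finset.sum_nonneg fun i _ => sq_nonneg _
    have hz1 : ∑ i ∈ S, (y i - T/m)^2 = 0 := by linarith
    have hz2 : ∑ i ∈ Sᶜ, (y i + T/((n:ℝ)-m))^2 = 0 := by linarith
    have hyS : ∀ i ∈ S, y i = T/m := by
      intro i hi
      have h := (Finset.sum_eq_zero_iff_of_nonneg (fun i _ => sq_nonneg _)).1 hz1 i hi
      have := pow_eq_zero_iff (n := 2) (by norm_num) |>.1 h
      linarith
    have hyC : ∀ i ∈ Sᶜ, y i = -(T/((n:ℝ)-m)) := by
      intro i hi
      have h := (Finset.sum_eq_zero_iff_of_nonneg (fun i _ => sq_nonneg _)).1 hz2 i hi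
      have := pow_eq_zero_iff (n := 2) (by norm_num) |>.1 h
      linarith
    refine ⟨T / Real.sqrt ((m : ℝ) * ((n:ℝ) - m)), ?_, ?_, ?_⟩
    · rcases abs_eq (le_of_lt hsqrtpos) |>.1 habs with h | h
      · left; rw [h, div_self hsqrtpos.ne']
      · right; rw [h]; field_simp
    · intro i hi
      rw [hxy i, hyS i hi]
      have h3 : T / m = T / Real.sqrt ((m : ℝ) * ((n:ℝ) - m)) * Real.sqrt (((n:ℝ) - m)/m) := by
        rw [← sqrt_mul_div (m:ℝ) ((n:ℝ)-m) hmR hnm.le]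
        field_simp <;> ring
      rw [h3]
    · intro i hi
      rw [hxy i, hyC i (Finset.mem_compl.2 hi)]
      have h3 : T / ((n:ℝ)-m)
          = T / Real.sqrt ((m : ℝ) * ((n:ℝ) - m)) * Real.sqrt ((m:ℝ)/((n:ℝ)-m)) := by
        rw [← sqrt_mul_div ((n:ℝ)-m) (m:ℝ) hnm hmR.le, mul_comm ((n:ℝ)-m)]
        field_simp <;> ring
      rw [h3]
      ring
  · rintro ⟨s, hs, hSv, hCv⟩
    have hyS' : ∀ i ∈ S, y i = s * Real.sqrt (((n:ℝ)-m)/m) := by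
      intro i hi
      simp only [hy]
      rw [hSv i hi]
      field_simp <;> ring
    have hTv : T = (m:ℝ) * (s * Real.sqrt (((n:ℝ)-m)/m)) := by
      rw [hT, Finset.sum_congr rfl hyS', Finset.sum_const, hS, nsmul_eq_mul]
    have h1 : |s| = 1 := by rcases hs with h | h <;> rw [h] <;> norm_num
    show |T| = _
    rw [hTv, abs_mul, abs_mul, h1, abs_of_pos hmR, abs_of_nonneg (Real.sqrt_nonneg _), one_mul]
    rw [← sqrt_mul_div (m:ℝ) ((n:ℝ)-m) hmR hnm.le]
    field_simp
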